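/- The set of derivations of the Leibniz algebra L₆ is a linear subspace of End(V) of dimension 4. -/
import Mathlib


/-- `V = ℂ⁴`. -/
abbrev V : Type := Fin 4 → ℂ

/-- standard basis: `e 0 = e₁`, ..., `e 3 = e₄`. -/
def e (i : Fin 4) : V := Pi.single i 1

/-- Bracket of the Leibniz algebra `L₆`:
`⟦e₁,e₁⟧ = e₃`, `⟦e₂,e₂⟧ = e₄`, `⟦e₃,e₁⟧ = e₄`, all other basis products zero. -/
def br (x y : V) : V :=
  (x 0 * y 0) • e 2 + (x 1 * y 1 + x 2 * y 0) • e 3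

/-- A derivation. -/
def IsDer (d : V →ₗ[ℂ] V) : Prop :=
  ∀ x y : V, d (br x y) = br (d x) y + br x (d y)

lemma br_apply (x y : V) :
    br x y = ![0, 0, x 0 * y 0, x 1 * y 1 + x 2 * y 0] := by
  funext i
  fin_cases i <;> simp [br, e, Pi.single_apply]

/-- The generic derivation with parameters `c`. -/
noncomputable def Dmap (c : Fin 4 → ℂ) : V →ₗ[ℂ] V where
  toFun x := ![c 0 * x 0, (3/2) * c 0 * x 1,
               c 1 * x 0 + 2 * c 0 * x 2,
               c 2 * x 0 + c 3 * x 1 + c 1 * x 2 + 3 * c 0 * x 3]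
  map_add' x y := by funext i; fin_cases i <;> simp <;> ring
  map_smul' a x := by funext i; fin_cases i <;> simp <;> ring

lemma Dmap_apply (c : Fin 4 → ℂ) (x : V) :
    Dmap c x = ![c 0 * x 0, (3/2) * c 0 * x 1,
               c 1 * x 0 + 2 * c 0 * x 2,
               c 2 * x 0 + c 3 * x 1 + c 1 * x 2 + 3 * c 0 * x 3] := rfl

noncomputable def Phi : (Fin 4 → ℂ) →ₗ[ℂ] (V →ₗ[ℂ] V) where
  toFun := Dmap
  map_add' c c' := by
    apply LinearMap.ext; intro x; funext i
    fin_cases i <;> simp [Dmap_apply] <;> ring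
  map_smul' a c := by
    apply LinearMap.ext; intro x; funext i
    fin_cases i <;> simp [Dmap_apply] <;> ring

lemma isDer_Dmap (c : Fin 4 → ℂ) : IsDer (Dmap c) := by
  intro x y
  funext i
  fin_cases i <;>
    simp [br_apply, Dmap_apply] <;> ring

lemma e_apply (i j : Fin 4) : e i j = if i = j then 1 else 0 := by
  simp [e, Pi.single_apply, eq_comm]

lemma isDer_mem (d : V →ₗ[ℂ] V) (h : IsDer d) :
    Dmap ![d (e 0) 0, d (e 0) 2, d (e 0) 3, d (e 1) 3] = d := by
  have hb00 : br (e 0) (e 0) = e 2 := by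
    funext i; fin_cases i <;> simp [br_apply, e_apply]
  have hb11 : br (e 1) (e 1) = e 3 := by
    funext i; fin_cases i <;> simp [br_apply, e_apply]
  have hb20 : br (e 2) (e 0) = e 3 := by
    funext i; fin_cases i <;> simp [br_apply, e_apply]
  have hb01 : br (e 0) (e 1) = 0 := by
    funext i; fin_cases i <;> simp [br_apply, e_apply]
  have hb10 : br (e 1) (e 0) = 0 := by
    funext i; fin_cases i <;> simp [br_apply, e_apply]
  have h00 : d (e 2) = ![0, 0, 2 * d (e 0) 0, d (e 0) 2] := by
    have h' := h (e 0) (e 0); rw [hb00] at h'; rw [h']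
    funext k; fin_cases k <;> simp [br_apply, e_apply] <;> ring
  have h11 : d (e 3) = ![0, 0, 0, 2 * d (e 1) 1] := by
    have h' := h (e 1) (e 1); rw [hb11] at h'; rw [h']
    funext k; fin_cases k <;> simp [br_apply, e_apply] <;> ring
  have h20 : d (e 3) = ![0, 0, 0, 3 * d (e 0) 0] := by
    have h' := h (e 2) (e 0); rw [hb20, h00] at h'; rw [h']
    funext k; fin_cases k <;> simp [br_apply, e_apply] <;> ring
  have ha10 : d (e 0) 1 = 0 := by
    have h' := h (e 0) (e 1); rw [hb01] at h'
    have := congrFun h' 3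
    simpa [br_apply, e_apply] using this.symm
  have ha01 : d (e 1) 0 = 0 := by
    have h' := h (e 0) (e 1); rw [hb01] at h'
    have := congrFun h' 2
    simpa [br_apply, e_apply] using this.symm
  have ha21 : d (e 1) 2 = 0 := by
    have h' := h (e 1) (e 0); rw [hb10] at h'
    have := congrFun h' 3
    simp [br_apply, e_apply, ha10] at this
    exact this.symm
  have ha11 : d (e 1) 1 = 3 / 2 * d (e 0) 0 := by
    have := congrFun (h11.symm.trans h20) 3
    simp at this
    linear_combination this / 2
  apply (Pi.basisFun ℂ (Fin 4)).ext
  intro j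
  have hbe : ∀ j : Fin 4, (Pi.basisFun ℂ (Fin 4)) j = e j := by
    intro j; funext k; simp [e_apply, Pi.single_apply, Pi.basisFun_apply, eq_comm]
  rw [hbe]
  fin_cases j
  · show Dmap _ (e 0) = d (e 0)
    funext k; fin_cases k <;>
      simp [Dmap_apply, e_apply, ha10] <;> ring
  · show Dmap _ (e 1) = d (e 1)
    funext k; fin_cases k <;>
      simp [Dmap_apply, e_apply, ha01, ha11, ha21] <;> ring
  · show Dmap _ (e 2) = d (e 2)
    rw [h00]; funext k; fin_cases k <;>
      simp [Dmap_apply, e_apply] <;> ring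
  · show Dmap _ (e 3) = d (e 3)
    rw [h11]; funext k; fin_cases k <;>
      simp [Dmap_apply, e_apply, ha11] <;> ring

theorem derivations_of_L6 :
    ∃ S : Submodule ℂ (V →ₗ[ℂ] V),
      (S : Set (V →ₗ[ℂ] V)) = {d | IsDer d} ∧ Module.finrank ℂ S = 4 := by
  refine ⟨LinearMap.range Phi, ?_, ?_⟩
  · ext d
    simp only [SetLike.mem_coe, LinearMap.mem_range, Set.mem_setOf_eq]
    constructor
    · rintro ⟨c, rfl⟩; exact isDer_Dmap c
    · intro h; exact ⟨_, isDer_mem d h⟩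
  · have hinj : Function.Injective Phi := by
      intro c c' hcc
      funext i
      have h0 := congrFun (congrArg (fun f => f (e 0)) hcc) 0
      have h1 := congrFun (congrArg (fun f => f (e 0)) hcc) 2
      have h2 := congrFun (congrArg (fun f => f (e 0)) hcc) 3
      have h3 := congrFun (congrArg (fun f => f (e 1)) hcc) 3
      simp [Phi, Dmap_apply, e, Pi.single_apply] at h0 h1 h2 h3
      fin_cases i <;> assumption
    rw [LinearMap.finrank_range_of_inj hinj]
    simp
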